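/- Let nA, nB ≥ 1 and let ρ be a density matrix indexed by (Fin nA × Fin nB) such that Tr((Tr_A ρ)²) = 1, i.e., the reduced state on the second factor is pure. Then ρ = (Tr_B ρ) ⊗ (Tr_A ρ). -/

import Mathlib

open ComplexOrder Kronecker

/-- A density matrix: Hermitian, positive semidefinite, trace one. -/
def IsDensityMatrix {n : Type*} [Fintype n] [DecidableEq n] (ρ : Matrix n n ℂ) : Prop :=
  ρ.IsHermitian ∧ ρ.PosSemidef ∧ ρ.trace = 1

/-- Partial trace over the first factor. -/
noncomputable def ptraceA {nA nB : ℕ} (M : Matrix (Fin nA × Fin nB) (Fin nA × Fin nB) ℂ) :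
    Matrix (Fin nB) (Fin nB) ℂ :=
  Matrix.of fun j j' => ∑ i, M (i, j) (i, j')

/-- Partial trace over the second factor. -/
noncomputable def ptraceB {nA nB : ℕ} (M : Matrix (Fin nA × Fin nB) (Fin nA × Fin nB) ℂ) :
    Matrix (Fin nA) (Fin nA) ℂ :=
  Matrix.of fun i i' => ∑ j, M (i, j) (i', j)

section Aux
open Matrix

lemma diag_entry {n : ℕ} (V : Matrix (Fin n) (Fin n) ℂ) (d : Fin n → ℂ) (j j' : Fin n) :
    (V * Matrix.diagonal d * star V) j j' = ∑ a, V j a * d a * (starRingEnd ℂ) (V j' a) := by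
  rw [Matrix.mul_apply]
  refine Finset.sum_congr rfl fun a _ => ?_
  rw [Matrix.mul_diagonal, Matrix.star_apply]
  rfl

lemma my_conj_mul {n : ℕ} (V A B : Matrix (Fin n) (Fin n) ℂ) (hVU : star V * V = 1) :
    (V * A * star V) * (V * B * star V) = V * (A * B) * star V := by
  calc (V * A * star V) * (V * B * star V) = V * A * (star V * (V * (B * star V))) := by
        simp only [Matrix.mul_assoc]
    _ = V * A * ((star V * V) * (B * star V)) := by rw [← Matrix.mul_assoc (star V)]
    _ = V * A * (B * star V) := by rw [hVU, Matrix.one_mul]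
    _ = V * (A * B) * star V := by simp only [Matrix.mul_assoc]

lemma rank_one_aux {n : ℕ} (σ V : Matrix (Fin n) (Fin n) ℂ) (lam : Fin n → ℝ)
    (hVU : star V * V = 1)
    (hspec : σ = V * Matrix.diagonal (fun i => (lam i : ℂ)) * star V)
    (hnn : ∀ i, 0 ≤ lam i)
    (h1 : σ.trace = 1) (h2 : (σ * σ).trace = 1) :
    ∃ v : Fin n → ℂ, ∀ j j', σ j j' = v j * (starRingEnd ℂ) (v j') := by
  have htr1 : ∑ i, (lam i : ℂ) = 1 := by
    have : σ.trace = ∑ i, (lam i : ℂ) := by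
      rw [hspec, Matrix.trace_mul_comm, ← Matrix.mul_assoc, hVU, Matrix.one_mul,
        Matrix.trace_diagonal]
    rw [← this, h1]
  have htr2 : ∑ i, ((lam i : ℂ) * (lam i : ℂ)) = 1 := by
    have hsq : σ * σ = V * (Matrix.diagonal (fun i => (lam i : ℂ) * (lam i : ℂ))) * star V := by
      rw [hspec, my_conj_mul _ _ _ hVU, Matrix.diagonal_mul_diagonal]
    have : (σ * σ).trace = ∑ i, ((lam i : ℂ) * (lam i : ℂ)) := by
      rw [hsq, Matrix.trace_mul_comm, ← Matrix.mul_assoc, hVU, Matrix.one_mul,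
        Matrix.trace_diagonal]
    rw [← this, h2]
  have htr1' : ∑ i, lam i = 1 := by exact_mod_cast htr1
  have htr2' : ∑ i, lam i * lam i = 1 := by exact_mod_cast htr2
  have hle1 : ∀ i, lam i ≤ 1 := by
    intro i
    rw [← htr1']
    exact Finset.single_le_sum (fun j _ => hnn j) (Finset.mem_univ i)
  have h01 : ∀ i, lam i = 0 ∨ lam i = 1 := by
    have hz : ∑ i, (lam i - lam i * lam i) = 0 := by
      rw [Finset.sum_sub_distrib, htr1', htr2', sub_self]
    have hall := (Finset.sum_eq_zero_iff_of_nonneg (fun i _ =>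
      by nlinarith [hnn i, hle1 i])).mp hz
    intro i
    have hi := hall i (Finset.mem_univ i)
    have : lam i * (1 - lam i) = 0 := by nlinarith [hi]
    rcases mul_eq_zero.mp this with h0 | h0
    · exact Or.inl h0
    · exact Or.inr (by linarith)
  have hex : ∃ k, lam k = 1 ∧ ∀ l, l ≠ k → lam l = 0 := by
    have hex1 : ∃ k, lam k = 1 := by
      by_contra hc
      push_neg at hc
      have : ∀ i, lam i = 0 := fun i => (h01 i).resolve_right (hc i)
      simp [this] at htr1'
    obtain ⟨k, hk⟩ := hex1
    refine ⟨k, hk, fun l hl => ?_⟩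
    rcases h01 l with h0 | h0
    · exact h0
    · exfalso
      have hsub : ∑ i ∈ ({k, l} : Finset (Fin n)), lam i ≤ ∑ i, lam i :=
        Finset.sum_le_sum_of_subset_of_nonneg (Finset.subset_univ _) (fun i _ _ => hnn i)
      rw [Finset.sum_pair (Ne.symm hl), hk, h0, htr1'] at hsub
      norm_num at hsub
  obtain ⟨k, hk1, hk0⟩ := hex
  refine ⟨fun j => V j k, fun j j' => ?_⟩
  rw [hspec, diag_entry]
  rw [Finset.sum_eq_single k]
  · rw [hk1]; push_cast; ring
  · intro b _ hb
    rw [hk0 b hb]; push_cast; ring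
  · simp

/-- Embedding of a vector on the B factor at slot `i` on the A factor. -/
def emb {nA nB : ℕ} (i : Fin nA) (w : Fin nB → ℂ) : Fin nA × Fin nB → ℂ :=
  fun p => if p.1 = i then w p.2 else 0

lemma mulVec_emb {nA nB : ℕ} (ρ : Matrix (Fin nA × Fin nB) (Fin nA × Fin nB) ℂ)
    (i : Fin nA) (w : Fin nB → ℂ) (p : Fin nA × Fin nB) :
    (ρ *ᵥ emb i w) p = ∑ d, ρ p (i, d) * w d := by
  rw [Matrix.mulVec, dotProduct, Fintype.sum_prod_type]
  rw [Finset.sum_eq_single i]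
  · simp [emb]
  · intro c _ hc
    simp [emb, hc]
  · simp

lemma dot_emb {nA nB : ℕ} (ρ : Matrix (Fin nA × Fin nB) (Fin nA × Fin nB) ℂ)
    (i : Fin nA) (w : Fin nB → ℂ) :
    star (emb i w) ⬝ᵥ (ρ *ᵥ emb i w)
      = ∑ b, ∑ d, (starRingEnd ℂ) (w b) * ρ (i, b) (i, d) * w d := by
  rw [dotProduct, Fintype.sum_prod_type]
  rw [Finset.sum_eq_single i]
  · refine Finset.sum_congr rfl fun b _ => ?_
    rw [mulVec_emb]
    simp only [Pi.star_apply, emb, if_pos rfl]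
    rw [Finset.mul_sum]
    refine Finset.sum_congr rfl fun d _ => ?_
    rw [if_pos trivial, Complex.star_def]
    ring
  · intro c _ hc
    refine Finset.sum_eq_zero fun b _ => ?_
    simp [emb, hc]
  · simp

end Aux
open Matrix

/-- If the reduced state of a bipartite density matrix on the second factor is pure,
then the state factorizes as the Kronecker product of its reduced states. -/
theorem factorization_of_reduced_pure {nA nB : ℕ} (hA : 1 ≤ nA) (hB : 1 ≤ nB)
    (ρ : Matrix (Fin nA × Fin nB) (Fin nA × Fin nB) ℂ)
    (hρ : IsDensityMatrix ρ)
    (hpure : (ptraceA ρ * ptraceA ρ).trace = 1) :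
    ρ = ptraceB ρ ⊗ₖ ptraceA ρ := by
  obtain ⟨hH, hP, htr⟩ := hρ
  set σ := ptraceA ρ with hσdef
  -- trace of σ
  have hσtr : σ.trace = 1 := by
    rw [← htr, Matrix.trace, Matrix.trace]
    rw [Fintype.sum_prod_type]
    rw [Finset.sum_comm]
    rfl
  -- σ is Hermitian
  have hσH : σ.IsHermitian := by
    ext j j'
    simp only [Matrix.conjTranspose_apply, hσdef, ptraceA, Matrix.of_apply]
    rw [star_sum]
    exact Finset.sum_congr rfl fun i _ => hH.apply (i, j) (i, j')
  -- quadratic form of σ as a sum of quadratic forms of ρ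
  have hdot : ∀ x : Fin nB → ℂ,
      star x ⬝ᵥ (σ *ᵥ x) = ∑ i, star (emb i x) ⬝ᵥ (ρ *ᵥ emb i x) := by
    intro x
    have h1 : star x ⬝ᵥ (σ *ᵥ x)
        = ∑ b, ∑ d, ∑ i, (starRingEnd ℂ) (x b) * ρ (i, b) (i, d) * x d := by
      rw [dotProduct]
      refine Finset.sum_congr rfl fun b _ => ?_
      rw [Matrix.mulVec, dotProduct, Finset.mul_sum]
      refine Finset.sum_congr rfl fun d _ => ?_
      simp only [hσdef, ptraceA, Matrix.of_apply, Pi.star_apply, Complex.star_def]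
      rw [Finset.sum_mul, Finset.mul_sum]
      refine Finset.sum_congr rfl fun i _ => ?_
      ring
    rw [h1]
    calc ∑ b, ∑ d, ∑ i, (starRingEnd ℂ) (x b) * ρ (i, b) (i, d) * x d
        = ∑ b, ∑ i, ∑ d, (starRingEnd ℂ) (x b) * ρ (i, b) (i, d) * x d :=
          Finset.sum_congr rfl fun b _ => Finset.sum_comm
      _ = ∑ i, ∑ b, ∑ d, (starRingEnd ℂ) (x b) * ρ (i, b) (i, d) * x d := Finset.sum_comm
      _ = ∑ i, star (emb i x) ⬝ᵥ (ρ *ᵥ emb i x) :=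
          Finset.sum_congr rfl fun i _ => (dot_emb ρ i x).symm
  -- σ is positive semidefinite
  have hσP : σ.PosSemidef := by
    refine .of_dotProduct_mulVec_nonneg hσH fun x => ?_
    rw [hdot x]
    exact Finset.sum_nonneg fun i _ => hP.dotProduct_mulVec_nonneg _
  -- σ is rank one
  have hspec : σ = (hσH.eigenvectorUnitary : Matrix (Fin nB) (Fin nB) ℂ)
      * Matrix.diagonal (fun i => (hσH.eigenvalues i : ℂ))
      * star (hσH.eigenvectorUnitary : Matrix (Fin nB) (Fin nB) ℂ) := hσH.spectral_theorem
  have hVU : star (hσH.eigenvectorUnitary : Matrix (Fin nB) (Fin nB) ℂ)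
      * (hσH.eigenvectorUnitary : Matrix (Fin nB) (Fin nB) ℂ) = 1 :=
    Matrix.mem_unitaryGroup_iff'.mp hσH.eigenvectorUnitary.2
  obtain ⟨v, hv⟩ := rank_one_aux σ _ hσH.eigenvalues hVU hspec hσP.eigenvalues_nonneg hσtr hpure
  have hvnorm : ∑ j, v j * (starRingEnd ℂ) (v j) = 1 := by
    rw [← hσtr, Matrix.trace]
    exact (Finset.sum_congr rfl fun j _ => hv j j).symm
  -- vectors orthogonal to v are killed by ρ
  have hkill : ∀ w : Fin nB → ℂ, (∑ b, (starRingEnd ℂ) (v b) * w b = 0) →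
      ∀ i, ρ *ᵥ emb i w = 0 := by
    intro w hw i
    have hsum : ∑ i', star (emb i' w) ⬝ᵥ (ρ *ᵥ emb i' w) = 0 := by
      calc ∑ i', star (emb i' w) ⬝ᵥ (ρ *ᵥ emb i' w)
          = ∑ i', ∑ b, ∑ d, (starRingEnd ℂ) (w b) * ρ (i', b) (i', d) * w d :=
            Finset.sum_congr rfl fun i' _ => dot_emb ρ i' w
        _ = ∑ b, ∑ d, (starRingEnd ℂ) (w b) * σ b d * w d := by
            rw [Finset.sum_comm]
            refine Finset.sum_congr rfl fun b _ => ?_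
            rw [Finset.sum_comm]
            refine Finset.sum_congr rfl fun d _ => ?_
            simp only [hσdef, ptraceA, Matrix.of_apply]
            rw [Finset.mul_sum, Finset.sum_mul]
        _ = (∑ b, (starRingEnd ℂ) (w b) * v b) * (∑ d, (starRingEnd ℂ) (v d) * w d) := by
            rw [Finset.sum_mul]
            refine Finset.sum_congr rfl fun b _ => ?_
            rw [Finset.mul_sum]
            refine Finset.sum_congr rfl fun d _ => ?_
            rw [hv b d]
            ring
        _ = 0 := by rw [hw, mul_zero]
    have hz := (Finset.sum_eq_zero_iff_of_nonneg fun i' _ => hP.dotProduct_mulVec_nonneg (emb i' w)).mp hsum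
      i (Finset.mem_univ i)
    exact (hP.dotProduct_mulVec_zero_iff _).mp hz
  -- right relation
  have hR : ∀ i j i' j', ρ (i, j) (i', j')
      = (starRingEnd ℂ) (v j') * ∑ d, ρ (i, j) (i', d) * v d := by
    intro i j i' j'
    set w : Fin nB → ℂ := fun b => (if b = j' then (1 : ℂ) else 0) - (starRingEnd ℂ) (v j') * v b
      with hwdef
    have hw : ∑ b, (starRingEnd ℂ) (v b) * w b = 0 := by
      simp only [hwdef, mul_sub, Finset.sum_sub_distrib]
      have e1 : ∑ b, (starRingEnd ℂ) (v b) * (if b = j' then (1 : ℂ) else 0)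
          = (starRingEnd ℂ) (v j') := by
        rw [Finset.sum_eq_single j']
        · simp
        · intro b _ hb; simp [hb]
        · simp
      have e2 : ∑ b, (starRingEnd ℂ) (v b) * ((starRingEnd ℂ) (v j') * v b)
          = (starRingEnd ℂ) (v j') := by
        have h3 : ∑ b, (starRingEnd ℂ) (v b) * ((starRingEnd ℂ) (v j') * v b)
            = (starRingEnd ℂ) (v j') * ∑ b, v b * (starRingEnd ℂ) (v b) := by
          rw [Finset.mul_sum]
          exact Finset.sum_congr rfl fun b _ => by ring
        rw [h3, hvnorm, mul_one]
      rw [e1, e2, sub_self]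
    have h0 := congrFun (hkill w hw i') (i, j)
    rw [mulVec_emb] at h0
    simp only [Pi.zero_apply] at h0
    have h4 : ∑ d, ρ (i, j) (i', d) * w d
        = ρ (i, j) (i', j') - (starRingEnd ℂ) (v j') * ∑ d, ρ (i, j) (i', d) * v d := by
      simp only [hwdef, mul_sub, Finset.sum_sub_distrib]
      congr 1
      · rw [Finset.sum_eq_single j']
        · simp
        · intro b _ hb; simp [hb]
        · simp
      · rw [Finset.mul_sum]
        exact Finset.sum_congr rfl fun d _ => by ring
    rw [h4] at h0
    exact (sub_eq_zero.mp h0).symm ▸ rfl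
  -- left relation
  have hL : ∀ i j i' j', ρ (i, j) (i', j')
      = v j * ∑ d, ρ (i, d) (i', j') * (starRingEnd ℂ) (v d) := by
    intro i j i' j'
    have h1 : ρ (i, j) (i', j') = star (ρ (i', j') (i, j)) := (hH.apply _ _).symm
    rw [h1, hR i' j' i j, star_mul']
    have h2 : star (∑ d, ρ (i', j') (i, d) * v d)
        = ∑ d, ρ (i, d) (i', j') * (starRingEnd ℂ) (v d) := by
      rw [star_sum]
      refine Finset.sum_congr rfl fun d _ => ?_
      rw [star_mul', hH.apply]
      rfl
    rw [h2]
    have h3 : star ((starRingEnd ℂ) (v j)) = v j := by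
      simp [Complex.star_def]
    rw [h3]
  -- conclude
  ext ⟨i, j⟩ ⟨i', j'⟩
  set T : ℂ := ∑ d, (∑ a, ρ (i, a) (i', d) * (starRingEnd ℂ) (v a)) * v d with hT
  have key : ∀ b b', ρ (i, b) (i', b') = v b * (starRingEnd ℂ) (v b') * T := by
    intro b b'
    rw [hR i b i' b']
    have h5 : ∑ d, ρ (i, b) (i', d) * v d = v b * T := by
      rw [hT, Finset.mul_sum]
      refine Finset.sum_congr rfl fun d _ => ?_
      rw [hL i b i' d]
      ring
    rw [h5]
    ring
  have hpB : ptraceB ρ i i' = T := by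
    simp only [ptraceB, Matrix.of_apply]
    calc ∑ c, ρ (i, c) (i', c) = ∑ c, v c * (starRingEnd ℂ) (v c) * T :=
        Finset.sum_congr rfl fun c _ => key c c
      _ = (∑ c, v c * (starRingEnd ℂ) (v c)) * T := by rw [Finset.sum_mul]
      _ = T := by rw [hvnorm, one_mul]
  show ρ (i, j) (i', j') = (ptraceB ρ ⊗ₖ σ) (i, j) (i', j')
  simp only [Matrix.kroneckerMap_apply]
  rw [hpB, hv j j', key j j']
  ring
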